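/- arXiv:2510.12568 — 3 statements merged into one kernel-verified Lean document; each statement's English description precedes it below -/
import Mathlib

section
/- A power series method P_ρ is regular (i.e., every convergent sequence is P_ρ-convergent to the same limit) if and only if for every fixed m, lim_{y→R⁻} ρ_m y^m / ρ(y) = 0. -/
open Filter

set_option maxHeartbeats 1000000

/-- The filter describing `y → R⁻` through positive reals below the radius `R ∈ (0,∞]`:
for `R = ∞` this is `atTop`, otherwise approach of `R.toReal` from below. -/
noncomputable def psFilter (R : ENNReal) : Filter ℝ :=
  (if R = ⊤ then Filter.atTop else nhdsWithin R.toReal (Set.Iio R.toReal)) ⊓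
    Filter.principal {y : ℝ | 0 < y ∧ ENNReal.ofReal y < R}

/-- A power series method `P_ρ` is regular (every convergent sequence is `P_ρ`-convergent
to the same limit) iff `ρ_m y^m / ρ(y) → 0` as `y → R⁻` for every fixed `m`. -/
theorem stmt_10 (ρ : ℕ → ℝ) (hρ0 : 0 < ρ 0) (hρ : ∀ m, 0 ≤ ρ m)
    (R : ENNReal) (hR : 0 < R)
    (hsum : ∀ y : ℝ, 0 < y → ENNReal.ofReal y < R → Summable (fun m => ρ m * y ^ m)) :
    (∀ (x : ℕ → ℝ) (L : ℝ), Tendsto x atTop (nhds L) →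
        Tendsto (fun y : ℝ => (∑' m : ℕ, x m * ρ m * y ^ m) / ∑' m : ℕ, ρ m * y ^ m)
          (psFilter R) (nhds L)) ↔
    (∀ m : ℕ, Tendsto (fun y : ℝ => ρ m * y ^ m / ∑' k : ℕ, ρ k * y ^ k)
        (psFilter R) (nhds 0)) := by
  constructor
  · -- regularity → condition, via the indicator sequence
    intro Hreg m
    have hx : Tendsto (fun k => if k = m then (1:ℝ) else 0) atTop (nhds 0) := by
      apply Tendsto.congr' _ tendsto_const_nhds
      filter_upwards [eventually_ge_atTop (m+1)] with k hk
      have : k ≠ m := by omega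
      simp [this]
    have := Hreg _ 0 hx
    refine this.congr fun y => ?_
    congr 1
    rw [tsum_eq_single m]
    · simp
    · intro k hk; simp [hk]
  · -- condition → regularity
    intro H x L hx
    rw [Metric.tendsto_nhds]
    intro ε hε
    have he : Tendsto (fun m => x m - L) atTop (nhds 0) := by
      simpa using hx.sub_const L
    obtain ⟨N, hN⟩ := (Metric.tendsto_atTop.mp he) (ε/2) (by positivity)
    have hN' : ∀ m, N ≤ m → |x m - L| ≤ ε/2 := by
      intro m hm
      have := hN m hm
      rw [Real.dist_eq, sub_zero] at this
      exact this.le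
    -- a bound on |x m - L|
    obtain ⟨C, hC⟩ : ∃ C, ∀ m, |x m - L| ≤ C := by
      obtain ⟨C, hC⟩ := he.abs.bddAbove_range
      exact ⟨C, fun m => hC ⟨m, rfl⟩⟩
    -- the finite-sum error term tends to 0
    have hG : Tendsto (fun y : ℝ => ∑ m ∈ Finset.range N,
        |x m - L| * (ρ m * y ^ m / ∑' k : ℕ, ρ k * y ^ k)) (psFilter R) (nhds 0) := by
      have : Tendsto (fun y : ℝ => ∑ m ∈ Finset.range N,
          |x m - L| * (ρ m * y ^ m / ∑' k : ℕ, ρ k * y ^ k)) (psFilter R)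
          (nhds (∑ m ∈ Finset.range N, |x m - L| * 0)) :=
        tendsto_finset_sum _ fun m _ => (H m).const_mul _
      simpa using this
    have h1 : ∀ᶠ y in psFilter R, (∑ m ∈ Finset.range N,
        |x m - L| * (ρ m * y ^ m / ∑' k : ℕ, ρ k * y ^ k)) < ε/2 := by
      have : {z : ℝ | z < ε/2} ∈ nhds (0:ℝ) := by
        apply IsOpen.mem_nhds (isOpen_lt continuous_id continuous_const)
        simpa using half_pos hε
      exact hG.eventually this
    have h2 : ∀ᶠ y in psFilter R, 0 < y ∧ ENNReal.ofReal y < R := by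
      rw [psFilter, eventually_inf_principal]
      exact Eventually.of_forall fun y hy => hy
    filter_upwards [h1, h2] with y hGy hy
    obtain ⟨hy0, hyR⟩ := hy
    have hS : Summable (fun m => ρ m * y ^ m) := hsum y hy0 hyR
    have ht0 : ∀ m, 0 ≤ ρ m * y ^ m := fun m =>
      mul_nonneg (hρ m) (pow_nonneg hy0.le m)
    have hρy : 0 < ∑' k : ℕ, ρ k * y ^ k := by
      have h0 : ρ 0 * y ^ 0 ≤ ∑' k : ℕ, ρ k * y ^ k :=
        Summable.le_tsum hS 0 fun j _ => ht0 j
      simp only [pow_zero, mul_one] at h0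
      exact lt_of_lt_of_le hρ0 h0
    have hsa : Summable (fun m => |x m - L| * (ρ m * y ^ m)) :=
      Summable.of_nonneg_of_le (fun m => mul_nonneg (abs_nonneg _) (ht0 m))
        (fun m => mul_le_mul_of_nonneg_right (hC m) (ht0 m)) (hS.mul_left C)
    have hse : Summable (fun m => (x m - L) * (ρ m * y ^ m)) :=
      Summable.of_abs (hsa.congr fun m => by
        rw [abs_mul, abs_of_nonneg (ht0 m)])
    -- decompose the numerator
    have hnum : (∑' m : ℕ, x m * ρ m * y ^ m)
        = (∑' m : ℕ, (x m - L) * (ρ m * y ^ m)) + L * ∑' m : ℕ, ρ m * y ^ m := by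
      rw [← tsum_mul_left, ← Summable.tsum_add hse (hS.mul_left L)]
      exact tsum_congr fun m => by ring
    have key : (∑' m : ℕ, x m * ρ m * y ^ m) / (∑' m : ℕ, ρ m * y ^ m) - L
        = (∑' m : ℕ, (x m - L) * (ρ m * y ^ m)) / (∑' m : ℕ, ρ m * y ^ m) := by
      rw [hnum, add_div, mul_div_assoc, div_self hρy.ne', mul_one, add_sub_cancel_right]
    -- bound the numerator
    have habs : |∑' m : ℕ, (x m - L) * (ρ m * y ^ m)|
        ≤ (∑ m ∈ Finset.range N, |x m - L| * (ρ m * y ^ m))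
          + ε/2 * ∑' k : ℕ, ρ k * y ^ k := by
      have hnorm : Summable (fun m => ‖(x m - L) * (ρ m * y ^ m)‖) :=
        hsa.congr fun m => by
          rw [Real.norm_eq_abs, abs_mul, abs_of_nonneg (ht0 m)]
      have step1 : |∑' m : ℕ, (x m - L) * (ρ m * y ^ m)|
          ≤ ∑' m : ℕ, |x m - L| * (ρ m * y ^ m) := by
        calc |∑' m : ℕ, (x m - L) * (ρ m * y ^ m)|
            ≤ ∑' m : ℕ, ‖(x m - L) * (ρ m * y ^ m)‖ := norm_tsum_le_tsum_norm hnorm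
          _ = ∑' m : ℕ, |x m - L| * (ρ m * y ^ m) := tsum_congr fun m => by
              rw [Real.norm_eq_abs, abs_mul, abs_of_nonneg (ht0 m)]
      have hsplit : (∑' m : ℕ, |x m - L| * (ρ m * y ^ m))
          = (∑ m ∈ Finset.range N, |x m - L| * (ρ m * y ^ m))
            + ∑' i : ℕ, |x (i + N) - L| * (ρ (i + N) * y ^ (i + N)) :=
        (Summable.sum_add_tsum_nat_add N hsa).symm
      have htail1 : (∑' i : ℕ, |x (i + N) - L| * (ρ (i + N) * y ^ (i + N)))
          ≤ ∑' i : ℕ, ε/2 * (ρ (i + N) * y ^ (i + N)) := by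
        have hA := (summable_nat_add_iff (f := fun m => |x m - L| * (ρ m * y ^ m)) N).mpr hsa
        have hB := ((summable_nat_add_iff (f := fun m => ρ m * y ^ m) N).mpr hS).mul_left (ε/2)
        exact Summable.tsum_le_tsum
          (fun i => mul_le_mul_of_nonneg_right (hN' _ (Nat.le_add_left N i)) (ht0 _)) hA hB
      have htail2 : (∑' i : ℕ, ρ (i + N) * y ^ (i + N)) ≤ ∑' k : ℕ, ρ k * y ^ k := by
        have := Summable.sum_add_tsum_nat_add N hS
        have hpos : 0 ≤ ∑ i ∈ Finset.range N, ρ i * y ^ i :=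
          Finset.sum_nonneg fun i _ => ht0 i
        linarith
      calc |∑' m : ℕ, (x m - L) * (ρ m * y ^ m)|
          ≤ ∑' m : ℕ, |x m - L| * (ρ m * y ^ m) := step1
        _ = (∑ m ∈ Finset.range N, |x m - L| * (ρ m * y ^ m))
            + ∑' i : ℕ, |x (i + N) - L| * (ρ (i + N) * y ^ (i + N)) := hsplit
        _ ≤ (∑ m ∈ Finset.range N, |x m - L| * (ρ m * y ^ m))
            + ε/2 * ∑' i : ℕ, ρ (i + N) * y ^ (i + N) := by
            have heq : (∑' i : ℕ, ε/2 * (ρ (i + N) * y ^ (i + N)))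
                = ε/2 * ∑' i : ℕ, ρ (i + N) * y ^ (i + N) := tsum_mul_left
            linarith [htail1]
        _ ≤ _ := by
            have := mul_le_mul_of_nonneg_left htail2 (le_of_lt (half_pos hε))
            linarith
    rw [Real.dist_eq, key, abs_div, abs_of_pos hρy]
    rw [div_lt_iff₀ hρy]
    calc |∑' m : ℕ, (x m - L) * (ρ m * y ^ m)|
        ≤ (∑ m ∈ Finset.range N, |x m - L| * (ρ m * y ^ m))
          + ε/2 * ∑' k : ℕ, ρ k * y ^ k := habs
      _ < ε/2 * (∑' k : ℕ, ρ k * y ^ k) + ε/2 * ∑' k : ℕ, ρ k * y ^ k := by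
          have : (∑ m ∈ Finset.range N, |x m - L| * (ρ m * y ^ m))
              = (∑ m ∈ Finset.range N,
                  |x m - L| * (ρ m * y ^ m / ∑' k : ℕ, ρ k * y ^ k))
                * (∑' k : ℕ, ρ k * y ^ k) := by
            rw [Finset.sum_mul]
            exact Finset.sum_congr rfl fun m _ => by
              rw [mul_assoc, div_mul_cancel₀ _ hρy.ne']
          rw [this]
          have := mul_lt_mul_of_pos_right hGy hρy
          linarith
      _ = ε * (∑' k : ℕ, ρ k * y ^ k) := by ring
end

section
/- If (x_m) is a bounded real sequence converging to L, then for the Borel method, lim_{y→∞} e^{-y} ∑_{m=0}^∞ x_m y^m / m! = L (regularity of the Borel method for bounded convergent sequences). -/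
set_option maxHeartbeats 1000000


open Filter

private lemma exp_tsum (y : ℝ) : (∑' n : ℕ, y ^ n / n.factorial) = Real.exp y := by
  rw [Real.exp_eq_exp_ℝ, NormedSpace.exp_eq_tsum_div]

private lemma summable_aux (c : ℝ) (f : ℕ → ℝ) (hf : ∀ m, |f m| ≤ c) (y : ℝ) :
    Summable (fun m : ℕ => f m * y ^ m / m.factorial) := by
  refine Summable.of_norm_bounded (g := fun m => c * (|y| ^ m / m.factorial))
    ((Real.summable_pow_div_factorial |y|).mul_left c) fun m => ?_
  rw [Real.norm_eq_abs, abs_div, abs_mul, abs_pow, Nat.abs_cast, mul_div_assoc]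
  exact mul_le_mul_of_nonneg_right (hf m) (by positivity)

/-- Regularity of the Borel method for bounded convergent sequences: if `|x_m| ≤ C`
and `x_m → L` then `e^{-y} ∑ x_m y^m/m! → L` as `y → ∞`. -/
theorem stmt_11 (x : ℕ → ℝ) (C : ℝ) (hb : ∀ m, |x m| ≤ C) (L : ℝ)
    (hL : Tendsto x atTop (nhds L)) :
    Tendsto (fun y : ℝ => Real.exp (-y) * ∑' m : ℕ, x m * y ^ m / m.factorial)
      atTop (nhds L) := by
  set D : ℝ := C + |L| with hD
  have hd : ∀ m, |x m - L| ≤ D := fun m =>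
    (abs_sub _ _).trans (add_le_add (hb m) le_rfl)
  have hD0 : 0 ≤ D := le_trans (abs_nonneg _) (hd 0)
  have hsumd : ∀ y : ℝ, Summable (fun m : ℕ => (x m - L) * y ^ m / m.factorial) :=
    summable_aux D _ hd
  have key : ∀ y : ℝ, Real.exp (-y) * ∑' m : ℕ, x m * y ^ m / m.factorial
      = Real.exp (-y) * (∑' m : ℕ, (x m - L) * y ^ m / m.factorial) + L := by
    intro y
    have h2 : Summable (fun m : ℕ => L * (y ^ m / m.factorial)) :=
      (Real.summable_pow_div_factorial y).mul_left L
    have heq : (fun m : ℕ => x m * y ^ m / m.factorial)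
        = fun m : ℕ => (x m - L) * y ^ m / m.factorial + L * (y ^ m / m.factorial) := by
      funext m; ring
    have hmul : Real.exp (-y) * Real.exp y = 1 := by
      rw [← Real.exp_add]; simp
    rw [heq, Summable.tsum_add (hsumd y) h2, tsum_mul_left, exp_tsum, mul_add,
      show Real.exp (-y) * (L * Real.exp y) = Real.exp (-y) * Real.exp y * L by ring,
      hmul, one_mul]
  simp only [key]
  have main : Tendsto (fun y : ℝ =>
      Real.exp (-y) * (∑' m : ℕ, (x m - L) * y ^ m / m.factorial)) atTop (nhds 0) := by
    rw [Metric.tendsto_atTop]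
    intro ε hε
    obtain ⟨N, hN⟩ := Metric.tendsto_atTop.mp hL (ε/4) (by linarith)
    set P : ℝ → ℝ := fun y => ∑ m ∈ Finset.range N, y ^ m / m.factorial with hP
    have hterm : ∀ m : ℕ, Tendsto (fun y : ℝ => Real.exp (-y) * (y ^ m / m.factorial))
        atTop (nhds 0) := by
      intro m
      have := (Real.tendsto_pow_mul_exp_neg_atTop_nhds_zero m).div_const (m.factorial : ℝ)
      rw [zero_div] at this
      convert this using 2 with y
      ring
    have hpoly : Tendsto (fun y : ℝ => D * (Real.exp (-y) * P y)) atTop (nhds 0) := by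
      have hsum := tendsto_finset_sum (Finset.range N) (fun m _ => hterm m)
      simp only [Finset.sum_const, smul_zero] at hsum
      have hcongr : Tendsto (fun y : ℝ => Real.exp (-y) * P y) atTop (nhds 0) := by
        refine hsum.congr fun y => ?_
        rw [hP]; rw [Finset.mul_sum]
      simpa using hcongr.const_mul D
    obtain ⟨Y₁, hY₁⟩ := Metric.tendsto_atTop.mp hpoly (ε/2) (by linarith)
    refine ⟨max Y₁ 0, fun y hy => ?_⟩
    have hy0 : 0 ≤ y := le_trans (le_max_right _ _) hy
    have hyY : Y₁ ≤ y := le_trans (le_max_left _ _) hy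
    have hsabs : Summable (fun m : ℕ => |x m - L| * y ^ m / m.factorial) := by
      have := summable_aux D (fun m => |x m - L|) (fun m => by
        rw [abs_abs]; exact hd m) y
      exact this
    -- bound the tsum
    have habs : |∑' m : ℕ, (x m - L) * y ^ m / m.factorial|
        ≤ ∑' m : ℕ, |x m - L| * y ^ m / m.factorial := by
      have := norm_tsum_le_tsum_norm (f := fun m : ℕ => (x m - L) * y ^ m / m.factorial)
        (by
          have : (fun m : ℕ => ‖(x m - L) * y ^ m / m.factorial‖)
              = fun m : ℕ => |x m - L| * y ^ m / m.factorial := by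
            funext m
            rw [Real.norm_eq_abs, abs_div, abs_mul, abs_pow, Nat.abs_cast,
              abs_of_nonneg hy0]
          rw [this]; exact hsabs)
      rw [Real.norm_eq_abs] at this
      refine this.trans (le_of_eq ?_)
      congr 1; funext m
      rw [Real.norm_eq_abs, abs_div, abs_mul, abs_pow, Nat.abs_cast, abs_of_nonneg hy0]
    have hsplit : (∑' m : ℕ, |x m - L| * y ^ m / m.factorial)
        = (∑ m ∈ Finset.range N, |x m - L| * y ^ m / m.factorial)
          + ∑' m : ℕ, |x (m + N) - L| * y ^ (m + N) / (m + N).factorial := by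
      exact (Summable.sum_add_tsum_nat_add N hsabs).symm
    have hhead : (∑ m ∈ Finset.range N, |x m - L| * y ^ m / m.factorial) ≤ D * P y := by
      rw [hP, Finset.mul_sum]
      apply Finset.sum_le_sum
      intro m _
      rw [mul_div_assoc]
      exact mul_le_mul_of_nonneg_right (hd m) (by positivity)
    have htail : (∑' m : ℕ, |x (m + N) - L| * y ^ (m + N) / (m + N).factorial)
        ≤ (ε/4) * Real.exp y := by
      have h1 : (∑' m : ℕ, |x (m + N) - L| * y ^ (m + N) / (m + N).factorial)
          ≤ ∑' m : ℕ, (ε/4) * (y ^ (m + N) / (m + N).factorial) := by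
        refine Summable.tsum_le_tsum (fun m => ?_) ((summable_nat_add_iff N).mpr hsabs)
          (((summable_nat_add_iff N).mpr (Real.summable_pow_div_factorial y)).mul_left (ε/4))
        rw [mul_div_assoc]
        refine mul_le_mul_of_nonneg_right ?_ (by positivity)
        rw [← Real.dist_eq]; exact (hN (m + N) (Nat.le_add_left N m)).le
      refine h1.trans ?_
      rw [tsum_mul_left]
      have h2 := Summable.sum_add_tsum_nat_add N (Real.summable_pow_div_factorial y)
      have h3 : 0 ≤ ∑ m ∈ Finset.range N, y ^ m / (m.factorial : ℝ) := by
        apply Finset.sum_nonneg; intro m _; positivity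
      have h4 : (∑' m : ℕ, y ^ (m + N) / ((m + N).factorial : ℝ)) ≤ Real.exp y := by
        rw [← exp_tsum y]; linarith
      exact mul_le_mul_of_nonneg_left h4 (by linarith)
    have hdist : dist (Real.exp (-y) * ∑' m : ℕ, (x m - L) * y ^ m / m.factorial) 0
        = Real.exp (-y) * |∑' m : ℕ, (x m - L) * y ^ m / m.factorial| := by
      rw [Real.dist_eq, sub_zero, abs_mul, abs_of_pos (Real.exp_pos _)]
    rw [hdist]
    have hmul : Real.exp (-y) * Real.exp y = 1 := by rw [← Real.exp_add]; simp
    have hb1 : Real.exp (-y) * |∑' m : ℕ, (x m - L) * y ^ m / m.factorial|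
        ≤ Real.exp (-y) * (D * P y + (ε/4) * Real.exp y) := by
      refine mul_le_mul_of_nonneg_left ?_ (Real.exp_pos _).le
      rw [hsplit] at habs; linarith
    have hb2 : Real.exp (-y) * (D * P y + (ε/4) * Real.exp y)
        = D * (Real.exp (-y) * P y) + ε/4 := by
      have : Real.exp (-y) * ((ε/4) * Real.exp y)
          = (Real.exp (-y) * Real.exp y) * (ε/4) := by ring
      rw [mul_add, this, hmul, one_mul]; ring
    have hb3 := hY₁ y hyY
    rw [Real.dist_eq, sub_zero] at hb3
    have hb4 : D * (Real.exp (-y) * P y) < ε/2 := lt_of_le_of_lt (le_abs_self _) hb3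
    linarith
  have := main.add_const L
  simpa using this
end

section
/- Korovkin theorem via power series method: Let P be a regular power series method with weights p_m ≥ 0, p₀ > 0, p(y) = ∑ p_m y^m of radius R, and let {ℜ_m} be positive linear operators from C_*[0,∞) to B_*[0,∞) with ∑_m ‖ℜ_m φ₀‖_∞ p_m y^m < ∞ for all y ∈ (0,R). If for ν = 0,1,2, lim_{y→R⁻} (1/p(y)) ‖∑_m (ℜ_m φ_ν − φ_ν) p_m y^m‖_∞ = 0 where φ_ν(t) = e^{-νt}, then for every φ ∈ C_*[0,∞), lim_{y→R⁻} (1/p(y)) ‖∑_m (ℜ_m φ − φ) p_m y^m‖_∞ = 0. -/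
open Filter
set_option maxHeartbeats 1000000

/-- Continuous real functions on `[0,∞)` with a finite limit at infinity. -/
def CStar (f : ℝ → ℝ) : Prop :=
  ContinuousOn f (Set.Ici 0) ∧ ∃ L : ℝ, Tendsto f atTop (nhds L)

/-- Bounded real functions on `[0,∞)` with a finite limit at infinity. -/
def BStar (f : ℝ → ℝ) : Prop :=
  (∃ C : ℝ, ∀ ξ : ℝ, 0 ≤ ξ → |f ξ| ≤ C) ∧ ∃ L : ℝ, Tendsto f atTop (nhds L)

/-- The sup norm `‖f‖_∞ = sup_{ξ ≥ 0} |f(ξ)|`. -/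
noncomputable def supNorm (f : ℝ → ℝ) : ℝ := ⨆ ξ : Set.Ici (0:ℝ), |f ξ.1|

instance : Nonempty (Set.Ici (0:ℝ)) := ⟨⟨0, Set.mem_Ici.2 le_rfl⟩⟩

lemma supNorm_nonneg (f : ℝ → ℝ) : 0 ≤ supNorm f :=
  Real.iSup_nonneg (fun _ => abs_nonneg _)

lemma supNorm_le {f : ℝ → ℝ} {C : ℝ} (hC : ∀ ξ : ℝ, 0 ≤ ξ → |f ξ| ≤ C) :
    supNorm f ≤ C := ciSup_le (fun x => hC x.1 x.2)

lemma le_supNorm {f : ℝ → ℝ} {C : ℝ} (hC : ∀ ξ : ℝ, 0 ≤ ξ → |f ξ| ≤ C)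
    {ξ : ℝ} (hξ : 0 ≤ ξ) : |f ξ| ≤ supNorm f :=
  le_ciSup (f := fun x : Set.Ici (0:ℝ) => |f x.1|)
    ⟨C, by rintro _ ⟨x, rfl⟩; exact hC x.1 x.2⟩ ⟨ξ, hξ⟩

lemma cstar_const (c : ℝ) : CStar (fun _ => c) :=
  ⟨continuousOn_const, c, tendsto_const_nhds⟩

lemma cstar_comb {f g : ℝ → ℝ} (a b : ℝ) (hf : CStar f) (hg : CStar g) :
    CStar (fun t => a * f t + b * g t) := by
  obtain ⟨hfc, Lf, hLf⟩ := hf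
  obtain ⟨hgc, Lg, hLg⟩ := hg
  exact ⟨((continuousOn_const.mul hfc).add (continuousOn_const.mul hgc)),
    a * Lf + b * Lg,
    ((tendsto_const_nhds.mul hLf).add (tendsto_const_nhds.mul hLg))⟩

lemma tendsto_exp_neg : Tendsto (fun t : ℝ => Real.exp (-t)) atTop (nhds 0) :=
  Real.tendsto_exp_atBot.comp tendsto_neg_atTop_atBot

lemma cstar_e1 : CStar (fun t : ℝ => Real.exp (-t)) :=
  ⟨(Real.continuous_exp.comp continuous_neg).continuousOn, 0, tendsto_exp_neg⟩

lemma cstar_e2 : CStar (fun t : ℝ => Real.exp (-(2*t))) := by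
  refine ⟨(Real.continuous_exp.comp (by continuity)).continuousOn, 0, ?_⟩
  have h2 : Tendsto (fun t : ℝ => -(2*t)) atTop atBot := by
    have h : Tendsto (fun t : ℝ => 2*t) atTop atTop :=
      (tendsto_const_mul_atTop_of_pos two_pos).2 tendsto_id
    exact tendsto_neg_atBot_iff.2 h
  exact Real.tendsto_exp_atBot.comp h2

lemma cstar_bounded {φ : ℝ → ℝ} (hφ : CStar φ) :
    ∃ M : ℝ, 0 ≤ M ∧ ∀ ξ : ℝ, 0 ≤ ξ → |φ ξ| ≤ M := by
  obtain ⟨hc, L, hL⟩ := hφ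
  obtain ⟨T, hT⟩ := (Metric.tendsto_atTop.1 hL 1 one_pos)
  obtain ⟨C, hC⟩ := (isCompact_Icc (a := (0:ℝ)) (b := max T 0)).exists_bound_of_continuousOn
    (hc.mono (fun x hx => hx.1))
  refine ⟨max C (|L| + 1), le_trans ?_ (le_max_right _ _), fun ξ hξ => ?_⟩
  · positivity
  rcases le_total ξ (max T 0) with h | h
  · exact le_trans (by simpa using hC ξ ⟨hξ, h⟩) (le_max_left _ _)
  · have h1 : dist (φ ξ) L < 1 := hT ξ (le_trans (le_max_left _ _) h)
    have : |φ ξ| ≤ |L| + 1 := by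
      have := abs_sub_abs_le_abs_sub (φ ξ) L
      rw [Real.dist_eq] at h1; linarith
    exact le_trans this (le_max_right _ _)

lemma cstar_unif {φ : ℝ → ℝ} (hφ : CStar φ) {ε : ℝ} (hε : 0 < ε) :
    ∃ δ : ℝ, 0 < δ ∧ ∀ t ξ : ℝ, 0 ≤ t → 0 ≤ ξ →
      |Real.exp (-t) - Real.exp (-ξ)| < δ → |φ t - φ ξ| ≤ ε := by
  obtain ⟨hc, L, hL⟩ := hφ
  obtain ⟨T₀, hT₀⟩ := Metric.tendsto_atTop.1 hL (ε/2) (by linarith)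
  set T : ℝ := max T₀ 0 with hT
  have hT0 : 0 ≤ T := le_max_right _ _
  have htail : ∀ t : ℝ, T ≤ t → |φ t - L| < ε / 2 := by
    intro t ht
    have := hT₀ t (le_trans (le_max_left _ _) ht)
    rwa [Real.dist_eq] at this
  -- uniform continuity on [0, T+1]
  have hcomp : IsCompact (Set.Icc (0:ℝ) (T+1)) := isCompact_Icc
  have huc : UniformContinuousOn φ (Set.Icc 0 (T+1)) :=
    hcomp.uniformContinuousOn_of_continuous (hc.mono (fun x hx => hx.1))
  obtain ⟨δ', hδ', hucd⟩ := Metric.uniformContinuousOn_iff.1 huc ε hε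
  refine ⟨min (δ' * Real.exp (-(T+1))) (Real.exp (-T) - Real.exp (-(T+1))), ?_, ?_⟩
  · apply lt_min
    · positivity
    · have : Real.exp (-(T+1)) < Real.exp (-T) := Real.exp_lt_exp.2 (by linarith)
      linarith
  intro t ξ ht hξ hd
  have hd1 : |Real.exp (-t) - Real.exp (-ξ)| < δ' * Real.exp (-(T+1)) :=
    lt_of_lt_of_le hd (min_le_left _ _)
  have hd2 : |Real.exp (-t) - Real.exp (-ξ)| < Real.exp (-T) - Real.exp (-(T+1)) :=
    lt_of_lt_of_le hd (min_le_right _ _)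
  -- key: for a ≤ b in [0,T+1] : exp(-a) - exp(-b) ≥ exp(-(T+1)) * (b - a)
  have key : ∀ a b : ℝ, 0 ≤ a → a ≤ b → b ≤ T+1 →
      Real.exp (-(T+1)) * (b - a) ≤ Real.exp (-a) - Real.exp (-b) := by
    intro a b ha hab hb
    have h1 : Real.exp (-a) - Real.exp (-b) = Real.exp (-b) * (Real.exp (b-a) - 1) := by
      rw [mul_sub, ← Real.exp_add]; ring_nf
    rw [h1]
    have h2 : b - a ≤ Real.exp (b-a) - 1 := by
      have := Real.add_one_le_exp (b-a); linarith
    have h3 : Real.exp (-(T+1)) ≤ Real.exp (-b) := Real.exp_le_exp.2 (by linarith)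
    have h4 : (0:ℝ) ≤ b - a := by linarith
    calc Real.exp (-(T+1)) * (b-a) ≤ Real.exp (-b) * (b-a) := by
          exact mul_le_mul_of_nonneg_right h3 h4
      _ ≤ Real.exp (-b) * (Real.exp (b-a) - 1) :=
          mul_le_mul_of_nonneg_left h2 (Real.exp_pos _).le
  -- case analysis
  rcases le_or_gt t (T+1) with h1 | h1 <;> rcases le_or_gt ξ (T+1) with h2 | h2
  · -- both in [0, T+1]: use uniform continuity
    have hclose : |t - ξ| < δ' := by
      rcases le_total t ξ with hle | hle
      · have := key t ξ ht hle h2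
        have habs : Real.exp (-t) - Real.exp (-ξ) ≤ |Real.exp (-t) - Real.exp (-ξ)| :=
          le_abs_self _
        have hE : (0:ℝ) < Real.exp (-(T+1)) := Real.exp_pos _
        rw [abs_of_nonpos (by linarith)]
        nlinarith
      · have := key ξ t hξ hle h1
        have habs : Real.exp (-ξ) - Real.exp (-t) ≤ |Real.exp (-t) - Real.exp (-ξ)| := by
          rw [abs_sub_comm]; exact le_abs_self _
        have hE : (0:ℝ) < Real.exp (-(T+1)) := Real.exp_pos _
        rw [abs_of_nonneg (by linarith)]
        nlinarith
    have := hucd t ⟨ht, h1⟩ ξ ⟨hξ, h2⟩ (by rwa [Real.dist_eq])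
    rw [Real.dist_eq] at this; linarith
  · -- t ≤ T+1 < ξ; subcase on T ≤ t
    rcases le_or_gt T t with h3 | h3
    · have e1 := htail t h3
      have e2 := htail ξ (by linarith)
      have htri : |φ t - φ ξ| ≤ |φ t - L| + |φ ξ - L| := by
        rw [show φ t - φ ξ = (φ t - L) - (φ ξ - L) by ring]; exact abs_sub _ _
      linarith
    · exfalso
      have e1 : Real.exp (-T) < Real.exp (-t) := Real.exp_lt_exp.2 (by linarith)
      have e2 : Real.exp (-ξ) < Real.exp (-(T+1)) := Real.exp_lt_exp.2 (by linarith)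
      have : Real.exp (-T) - Real.exp (-(T+1)) < Real.exp (-t) - Real.exp (-ξ) := by linarith
      have := lt_of_lt_of_le this (le_abs_self _)
      linarith
  · rcases le_or_gt T ξ with h3 | h3
    · have e1 := htail t (by linarith)
      have e2 := htail ξ h3
      have htri : |φ t - φ ξ| ≤ |φ t - L| + |φ ξ - L| := by
        rw [show φ t - φ ξ = (φ t - L) - (φ ξ - L) by ring]; exact abs_sub _ _
      linarith
    · exfalso
      have e1 : Real.exp (-T) < Real.exp (-ξ) := Real.exp_lt_exp.2 (by linarith)
      have e2 : Real.exp (-t) < Real.exp (-(T+1)) := Real.exp_lt_exp.2 (by linarith)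
      have h5 : Real.exp (-T) - Real.exp (-(T+1)) < Real.exp (-ξ) - Real.exp (-t) := by linarith
      have h6 : Real.exp (-ξ) - Real.exp (-t) ≤ |Real.exp (-t) - Real.exp (-ξ)| := by
        rw [abs_sub_comm]; exact le_abs_self _
      linarith
  · have e1 := htail t (by linarith)
    have e2 := htail ξ (by linarith)
    have htri : |φ t - φ ξ| ≤ |φ t - L| + |φ ξ - L| := by
      rw [show φ t - φ ξ = (φ t - L) - (φ ξ - L) by ring]; exact abs_sub _ _
    linarith

/-- operator sends `0` to `0`. -/
lemma R_zero (ℜ : ℕ → (ℝ → ℝ) → ℝ → ℝ)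
    (hlin : ∀ (m : ℕ) (f g : ℝ → ℝ) (a b : ℝ), CStar f → CStar g →
      ∀ ξ : ℝ, 0 ≤ ξ → ℜ m (fun t => a * f t + b * g t) ξ = a * ℜ m f ξ + b * ℜ m g ξ)
    (m : ℕ) {ξ : ℝ} (hξ : 0 ≤ ξ) : ℜ m (fun _ => (0:ℝ)) ξ = 0 := by
  have h := hlin m (fun _ => (1:ℝ)) (fun _ => (1:ℝ)) 0 0 (cstar_const 1) (cstar_const 1) ξ hξ
  have he : (fun t : ℝ => (0:ℝ) * (fun _ : ℝ => (1:ℝ)) t + (0:ℝ) * (fun _ : ℝ => (1:ℝ)) t)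
      = (fun _ : ℝ => (0:ℝ)) := funext fun t => by norm_num
  rw [he] at h; linarith

lemma R_smul (ℜ : ℕ → (ℝ → ℝ) → ℝ → ℝ)
    (hlin : ∀ (m : ℕ) (f g : ℝ → ℝ) (a b : ℝ), CStar f → CStar g →
      ∀ ξ : ℝ, 0 ≤ ξ → ℜ m (fun t => a * f t + b * g t) ξ = a * ℜ m f ξ + b * ℜ m g ξ)
    {f : ℝ → ℝ} (hf : CStar f) (a : ℝ) (m : ℕ) {ξ : ℝ} (hξ : 0 ≤ ξ) :
    ℜ m (fun t => a * f t) ξ = a * ℜ m f ξ := by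
  have h := hlin m f f a 0 hf hf ξ hξ
  have he : (fun t => a * f t + (0:ℝ) * f t) = (fun t => a * f t) := funext fun t => by ring
  rw [he] at h; linarith

lemma R_nonneg (ℜ : ℕ → (ℝ → ℝ) → ℝ → ℝ)
    (hlin : ∀ (m : ℕ) (f g : ℝ → ℝ) (a b : ℝ), CStar f → CStar g →
      ∀ ξ : ℝ, 0 ≤ ξ → ℜ m (fun t => a * f t + b * g t) ξ = a * ℜ m f ξ + b * ℜ m g ξ)
    (hpos : ∀ (m : ℕ) (f g : ℝ → ℝ), CStar f → CStar g →
      (∀ t : ℝ, 0 ≤ t → f t ≤ g t) → ∀ ξ : ℝ, 0 ≤ ξ → ℜ m f ξ ≤ ℜ m g ξ)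
    {f : ℝ → ℝ} (hf : CStar f) (hf0 : ∀ t, 0 ≤ t → 0 ≤ f t) (m : ℕ) {ξ : ℝ} (hξ : 0 ≤ ξ) :
    0 ≤ ℜ m f ξ := by
  have h := hpos m (fun _ => (0:ℝ)) f (cstar_const 0) hf (fun t ht => hf0 t ht) ξ hξ
  rw [R_zero ℜ hlin m hξ] at h; exact h

lemma R_abs_le (ℜ : ℕ → (ℝ → ℝ) → ℝ → ℝ)
    (hlin : ∀ (m : ℕ) (f g : ℝ → ℝ) (a b : ℝ), CStar f → CStar g →
      ∀ ξ : ℝ, 0 ≤ ξ → ℜ m (fun t => a * f t + b * g t) ξ = a * ℜ m f ξ + b * ℜ m g ξ)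
    (hpos : ∀ (m : ℕ) (f g : ℝ → ℝ), CStar f → CStar g →
      (∀ t : ℝ, 0 ≤ t → f t ≤ g t) → ∀ ξ : ℝ, 0 ≤ ξ → ℜ m f ξ ≤ ℜ m g ξ)
    {f : ℝ → ℝ} (hf : CStar f) {c : ℝ} (hfb : ∀ t, 0 ≤ t → |f t| ≤ c)
    (m : ℕ) {ξ : ℝ} (hξ : 0 ≤ ξ) :
    |ℜ m f ξ| ≤ c * ℜ m (fun _ => (1:ℝ)) ξ := by
  have hone := cstar_const (1:ℝ)
  have hcm : CStar (fun t : ℝ => c * (fun _ : ℝ => (1:ℝ)) t) := by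
    have he : (fun t : ℝ => c * (fun _ : ℝ => (1:ℝ)) t) = (fun _ : ℝ => c) :=
      funext fun t => by simp
    rw [he]; exact cstar_const c
  have hcm' : CStar (fun t : ℝ => (-c) * (fun _ : ℝ => (1:ℝ)) t) := by
    have he : (fun t : ℝ => (-c) * (fun _ : ℝ => (1:ℝ)) t) = (fun _ : ℝ => -c) :=
      funext fun t => by simp
    rw [he]; exact cstar_const (-c)
  have hup := hpos m f (fun t : ℝ => c * (fun _ : ℝ => (1:ℝ)) t) hf hcm
    (fun t ht => by simpa using (abs_le.1 (hfb t ht)).2) ξ hξ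
  have hlow := hpos m (fun t : ℝ => (-c) * (fun _ : ℝ => (1:ℝ)) t) f hcm' hf
    (fun t ht => by simpa using (abs_le.1 (hfb t ht)).1) ξ hξ
  rw [R_smul ℜ hlin hone c m hξ] at hup
  rw [R_smul ℜ hlin hone (-c) m hξ] at hlow
  rw [abs_le]; constructor <;> linarith

lemma key_estimate
    (p : ℕ → ℝ) (hp : ∀ m, 0 ≤ p m)
    (ℜ : ℕ → (ℝ → ℝ) → ℝ → ℝ)
    (hmap : ∀ m f, CStar f → BStar (ℜ m f))
    (hlin : ∀ (m : ℕ) (f g : ℝ → ℝ) (a b : ℝ), CStar f → CStar g →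
      ∀ ξ : ℝ, 0 ≤ ξ → ℜ m (fun t => a * f t + b * g t) ξ = a * ℜ m f ξ + b * ℜ m g ξ)
    (hpos : ∀ (m : ℕ) (f g : ℝ → ℝ), CStar f → CStar g →
      (∀ t : ℝ, 0 ≤ t → f t ≤ g t) → ∀ ξ : ℝ, 0 ≤ ξ → ℜ m f ξ ≤ ℜ m g ξ)
    {y : ℝ} (hy : 0 < y)
    (hSp : Summable (fun m => p m * y ^ m))
    (hSB : Summable (fun m => supNorm (ℜ m (fun _ => 1)) * p m * y ^ m))
    (φ : ℝ → ℝ) (hφ : CStar φ)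
    (M ε₁ K : ℝ) (hM : 0 ≤ M) (hMb : ∀ ξ : ℝ, 0 ≤ ξ → |φ ξ| ≤ M)
    (hε₁ : 0 ≤ ε₁) (hK : 0 ≤ K)
    (huc : ∀ t ξ : ℝ, 0 ≤ t → 0 ≤ ξ →
      |φ t - φ ξ| ≤ ε₁ + K * (Real.exp (-t) - Real.exp (-ξ))^2) :
    supNorm (fun ξ => ∑' m : ℕ, (ℜ m φ ξ - φ ξ) * p m * y ^ m) ≤
      ε₁ * (supNorm (fun ξ => ∑' m : ℕ, (ℜ m (fun _ => (1:ℝ)) ξ - 1) * p m * y ^ m)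
          + ∑' m : ℕ, p m * y ^ m)
      + K * (supNorm (fun ξ => ∑' m : ℕ,
            (ℜ m (fun t => Real.exp (-(2*t))) ξ - Real.exp (-(2*ξ))) * p m * y ^ m)
        + 2 * supNorm (fun ξ => ∑' m : ℕ,
            (ℜ m (fun t => Real.exp (-t)) ξ - Real.exp (-ξ)) * p m * y ^ m)
        + supNorm (fun ξ => ∑' m : ℕ, (ℜ m (fun _ => (1:ℝ)) ξ - 1) * p m * y ^ m))
      + M * supNorm (fun ξ => ∑' m : ℕ, (ℜ m (fun _ => (1:ℝ)) ξ - 1) * p m * y ^ m) := by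
  have hone : CStar (fun _ : ℝ => (1:ℝ)) := cstar_const 1
  have hw : ∀ m, 0 ≤ p m * y ^ m := fun m => mul_nonneg (hp m) (pow_nonneg hy.le m)
  set N : ℕ → ℝ := fun m => supNorm (ℜ m (fun _ => (1:ℝ))) with hNdef
  set S0 := supNorm (fun ξ => ∑' m : ℕ, (ℜ m (fun _ => (1:ℝ)) ξ - 1) * p m * y ^ m) with hS0def
  set S1 := supNorm (fun ξ => ∑' m : ℕ,
      (ℜ m (fun t => Real.exp (-t)) ξ - Real.exp (-ξ)) * p m * y ^ m) with hS1def
  set S2 := supNorm (fun ξ => ∑' m : ℕ,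
      (ℜ m (fun t => Real.exp (-(2*t))) ξ - Real.exp (-(2*ξ))) * p m * y ^ m) with hS2def
  set P := ∑' m : ℕ, p m * y ^ m with hPdef
  -- pointwise operator facts
  have hR1nn : ∀ m (ξ : ℝ), 0 ≤ ξ → 0 ≤ ℜ m (fun _ => (1:ℝ)) ξ :=
    fun m ξ hξ => R_nonneg ℜ hlin hpos hone (fun t _ => zero_le_one) m hξ
  have hR1N : ∀ m (ξ : ℝ), 0 ≤ ξ → ℜ m (fun _ => (1:ℝ)) ξ ≤ N m := by
    intro m ξ hξ
    obtain ⟨⟨C, hC⟩, _⟩ := hmap m _ hone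
    exact le_trans (le_abs_self _) (le_supNorm hC hξ)
  have hNnn : ∀ m, 0 ≤ N m := fun m => supNorm_nonneg _
  -- summability machinery
  have hq : Summable (fun m => (N m + 1) * (p m * y ^ m)) := by
    have h := hSB.add hSp
    have he : (fun m => supNorm (ℜ m (fun _ => 1)) * p m * y ^ m + p m * y ^ m)
        = (fun m => (N m + 1) * (p m * y ^ m)) := funext fun m => by simp [hNdef]; ring
    rwa [he] at h
  have hsummable : ∀ (u : ℕ → ℝ) (c : ℝ), 0 ≤ c → (∀ m, |u m| ≤ c * (N m + 1)) →
      Summable (fun m => u m * p m * y ^ m) := by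
    intro u c hc hu
    have h1 : ∀ m, |u m * p m * y ^ m| ≤ c * ((N m + 1) * (p m * y ^ m)) := by
      intro m
      calc |u m * p m * y ^ m| = |u m| * (p m * y ^ m) := by
            rw [mul_assoc, abs_mul, abs_of_nonneg (hw m)]
        _ ≤ (c * (N m + 1)) * (p m * y ^ m) := mul_le_mul_of_nonneg_right (hu m) (hw m)
        _ = c * ((N m + 1) * (p m * y ^ m)) := by ring
    exact summable_abs_iff.mp
      (Summable.of_nonneg_of_le (fun m => abs_nonneg _) h1 (hq.mul_left c))
  have habs_tsum : ∀ (u : ℕ → ℝ) (c : ℝ), 0 ≤ c → (∀ m, |u m| ≤ c * (N m + 1)) →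
      |∑' m, u m * p m * y ^ m| ≤ c * ∑' m, (N m + 1) * (p m * y ^ m) := by
    intro u c hc hu
    have hs := hsummable u c hc hu
    have h1 : ∀ m, |u m * p m * y ^ m| ≤ c * ((N m + 1) * (p m * y ^ m)) := by
      intro m
      calc |u m * p m * y ^ m| = |u m| * (p m * y ^ m) := by
            rw [mul_assoc, abs_mul, abs_of_nonneg (hw m)]
        _ ≤ (c * (N m + 1)) * (p m * y ^ m) := mul_le_mul_of_nonneg_right (hu m) (hw m)
        _ = c * ((N m + 1) * (p m * y ^ m)) := by ring
    have habs' : Summable fun m => ‖u m * p m * y ^ m‖ := by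
      simp only [Real.norm_eq_abs]; exact hs.abs
    calc |∑' m, u m * p m * y ^ m| ≤ ∑' m, |u m * p m * y ^ m| := by
          have hn := norm_tsum_le_tsum_norm (f := fun m => u m * p m * y ^ m) habs'
          simp only [Real.norm_eq_abs] at hn
          exact hn
      _ ≤ ∑' m, c * ((N m + 1) * (p m * y ^ m)) := Summable.tsum_le_tsum h1 hs.abs (hq.mul_left c)
      _ = c * ∑' m, (N m + 1) * (p m * y ^ m) := tsum_mul_left
  have hdev : ∀ (f : ℝ → ℝ), CStar f → ∀ c : ℝ, (∀ t : ℝ, 0 ≤ t → |f t| ≤ c) →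
      ∀ m (ξ : ℝ), 0 ≤ ξ → |ℜ m f ξ - f ξ| ≤ c * (N m + 1) := by
    intro f hf c hfb m ξ hξ
    have hc : 0 ≤ c := le_trans (abs_nonneg _) (hfb 0 le_rfl)
    have h1 := R_abs_le ℜ hlin hpos hf hfb m hξ
    have h2 := mul_le_mul_of_nonneg_left (hR1N m ξ hξ) hc
    have h3 := hfb ξ hξ
    calc |ℜ m f ξ - f ξ| ≤ |ℜ m f ξ| + |f ξ| := abs_sub _ _
      _ ≤ c * N m + c := by linarith
      _ = c * (N m + 1) := by ring
  have hB : ∀ (f : ℝ → ℝ), CStar f → ∀ c : ℝ, 0 ≤ c → (∀ t : ℝ, 0 ≤ t → |f t| ≤ c) →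
      ∀ ξ : ℝ, 0 ≤ ξ →
      |∑' m, (ℜ m f ξ - f ξ) * p m * y ^ m| ≤ c * ∑' m, (N m + 1) * (p m * y ^ m) :=
    fun f hf c hc hfb ξ hξ => habs_tsum _ c hc (fun m => hdev f hf c hfb m ξ hξ)
  have hexp_le_one : ∀ t : ℝ, 0 ≤ t → Real.exp (-t) ≤ 1 := by
    intro t ht
    calc Real.exp (-t) ≤ Real.exp 0 := Real.exp_le_exp.2 (by linarith)
      _ = 1 := Real.exp_zero
  have he1b : ∀ t : ℝ, 0 ≤ t → |Real.exp (-t)| ≤ 1 := by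
    intro t ht; rw [abs_of_pos (Real.exp_pos _)]; exact hexp_le_one t ht
  have he2b : ∀ t : ℝ, 0 ≤ t → |Real.exp (-(2*t))| ≤ 1 := by
    intro t ht; rw [abs_of_pos (Real.exp_pos _)]
    calc Real.exp (-(2*t)) ≤ Real.exp 0 := Real.exp_le_exp.2 (by linarith)
      _ = 1 := Real.exp_zero
  have honeb : ∀ t : ℝ, 0 ≤ t → |(fun _ : ℝ => (1:ℝ)) t| ≤ 1 := fun t _ => by norm_num
  -- sup bounds on test deviations
  have hS0le : ∀ ξ : ℝ, 0 ≤ ξ →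
      |∑' m, (ℜ m (fun _ => (1:ℝ)) ξ - 1) * p m * y ^ m| ≤ S0 := by
    intro ξ hξ
    rw [hS0def]
    exact le_supNorm (fun ξ' hξ' => by
      exact hB (fun _ => (1:ℝ)) hone 1 zero_le_one honeb ξ' hξ') hξ
  have hS1le : ∀ ξ : ℝ, 0 ≤ ξ →
      |∑' m, (ℜ m (fun t => Real.exp (-t)) ξ - Real.exp (-ξ)) * p m * y ^ m| ≤ S1 := by
    intro ξ hξ
    rw [hS1def]
    exact le_supNorm (fun ξ' hξ' => by
      exact hB (fun t => Real.exp (-t)) cstar_e1 1 zero_le_one he1b ξ' hξ') hξ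
  have hS2le : ∀ ξ : ℝ, 0 ≤ ξ →
      |∑' m, (ℜ m (fun t => Real.exp (-(2*t))) ξ - Real.exp (-(2*ξ))) * p m * y ^ m| ≤ S2 := by
    intro ξ hξ
    rw [hS2def]
    exact le_supNorm (fun ξ' hξ' => by
      exact hB (fun t => Real.exp (-(2*t))) cstar_e2 1 zero_le_one he2b ξ' hξ') hξ
  -- main bound, pointwise in ξ
  apply supNorm_le
  intro ξ hξ
  show |∑' m, (ℜ m φ ξ - φ ξ) * p m * y ^ m| ≤ _
  have hψC : CStar (fun t => (Real.exp (-t) - Real.exp (-ξ))^2) := by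
    refine ⟨(((Real.continuous_exp.comp continuous_neg).sub continuous_const).pow 2).continuousOn,
      (0 - Real.exp (-ξ))^2, ?_⟩
    exact (tendsto_exp_neg.sub tendsto_const_nhds).pow 2
  have huc' : ∀ t : ℝ, 0 ≤ t → |φ t - φ ξ| ≤ ε₁ + K * (Real.exp (-t) - Real.exp (-ξ))^2 :=
    fun t ht => huc t ξ ht hξ
  -- D and bounds
  have hDnn : ∀ m, 0 ≤ ℜ m (fun t => (Real.exp (-t) - Real.exp (-ξ))^2) ξ :=
    fun m => R_nonneg ℜ hlin hpos hψC (fun t _ => sq_nonneg _) m hξ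
  have hDle : ∀ m, ℜ m (fun t => (Real.exp (-t) - Real.exp (-ξ))^2) ξ
      ≤ ℜ m (fun _ => (1:ℝ)) ξ := by
    intro m
    refine hpos m _ _ hψC hone (fun t ht => ?_) ξ hξ
    show (Real.exp (-t) - Real.exp (-ξ))^2 ≤ 1
    have h1 := hexp_le_one t ht
    have h2 := hexp_le_one ξ hξ
    have h3 := Real.exp_pos (-t)
    have h4 := Real.exp_pos (-ξ)
    nlinarith [mul_nonneg (by linarith : (0:ℝ) ≤ 1 - Real.exp (-t) + Real.exp (-ξ))
      (by linarith : (0:ℝ) ≤ 1 + Real.exp (-t) - Real.exp (-ξ))]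
  -- upper and lower pointwise operator estimates
  have hup : ∀ m, ℜ m φ ξ - φ ξ ≤ φ ξ * (ℜ m (fun _ => (1:ℝ)) ξ - 1)
      + ε₁ * ℜ m (fun _ => (1:ℝ)) ξ
      + K * ℜ m (fun t => (Real.exp (-t) - Real.exp (-ξ))^2) ξ := by
    intro m
    have hU : CStar (fun t => (φ ξ + ε₁) * (fun _ : ℝ => (1:ℝ)) t
        + K * (fun t => (Real.exp (-t) - Real.exp (-ξ))^2) t) := cstar_comb _ _ hone hψC
    have h1 : ∀ t : ℝ, 0 ≤ t → φ t ≤ (fun t => (φ ξ + ε₁) * (fun _ : ℝ => (1:ℝ)) t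
        + K * (fun t => (Real.exp (-t) - Real.exp (-ξ))^2) t) t := by
      intro t ht
      have h2 := (abs_le.1 (huc' t ht)).2
      show φ t ≤ (φ ξ + ε₁) * 1 + K * (Real.exp (-t) - Real.exp (-ξ))^2
      linarith
    have h2 := hpos m φ _ hφ hU h1 ξ hξ
    have h3 := hlin m (fun _ : ℝ => (1:ℝ)) (fun t => (Real.exp (-t) - Real.exp (-ξ))^2)
      (φ ξ + ε₁) K hone hψC ξ hξ
    rw [h3] at h2
    linarith
  have hlo : ∀ m, φ ξ * (ℜ m (fun _ => (1:ℝ)) ξ - 1)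
      - ε₁ * ℜ m (fun _ => (1:ℝ)) ξ
      - K * ℜ m (fun t => (Real.exp (-t) - Real.exp (-ξ))^2) ξ ≤ ℜ m φ ξ - φ ξ := by
    intro m
    have hU : CStar (fun t => (φ ξ - ε₁) * (fun _ : ℝ => (1:ℝ)) t
        + (-K) * (fun t => (Real.exp (-t) - Real.exp (-ξ))^2) t) := cstar_comb _ _ hone hψC
    have h1 : ∀ t : ℝ, 0 ≤ t → (fun t => (φ ξ - ε₁) * (fun _ : ℝ => (1:ℝ)) t
        + (-K) * (fun t => (Real.exp (-t) - Real.exp (-ξ))^2) t) t ≤ φ t := by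
      intro t ht
      have h2 := (abs_le.1 (huc' t ht)).1
      show (φ ξ - ε₁) * 1 + (-K) * (Real.exp (-t) - Real.exp (-ξ))^2 ≤ φ t
      linarith
    have h2 := hpos m _ φ hU hφ h1 ξ hξ
    have h3 := hlin m (fun _ : ℝ => (1:ℝ)) (fun t => (Real.exp (-t) - Real.exp (-ξ))^2)
      (φ ξ - ε₁) (-K) hone hψC ξ hξ
    rw [h3] at h2
    linarith
  -- decomposition of D
  have hexp2 : ∀ s : ℝ, Real.exp (-(2*s)) = Real.exp (-s)^2 := by
    intro s; rw [sq, ← Real.exp_add]; ring_nf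
  have hDalt : ∀ m, ℜ m (fun t => (Real.exp (-t) - Real.exp (-ξ))^2) ξ
      = (ℜ m (fun t => Real.exp (-(2*t))) ξ - Real.exp (-(2*ξ)))
        - 2*Real.exp (-ξ) * (ℜ m (fun t => Real.exp (-t)) ξ - Real.exp (-ξ))
        + Real.exp (-ξ)^2 * (ℜ m (fun _ => (1:ℝ)) ξ - 1) := by
    intro m
    have hg : CStar (fun t : ℝ => (1:ℝ) * (fun t => Real.exp (-(2*t))) t
        + (-(2*Real.exp (-ξ))) * (fun t => Real.exp (-t)) t) := cstar_comb _ _ cstar_e2 cstar_e1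
    have h1 := hlin m (fun t => Real.exp (-(2*t))) (fun t => Real.exp (-t)) 1
      (-(2*Real.exp (-ξ))) cstar_e2 cstar_e1 ξ hξ
    have h2 := hlin m (fun t : ℝ => (1:ℝ) * (fun t => Real.exp (-(2*t))) t
        + (-(2*Real.exp (-ξ))) * (fun t => Real.exp (-t)) t) (fun _ => (1:ℝ)) 1
      (Real.exp (-ξ)^2) hg hone ξ hξ
    have hfe : (fun t : ℝ => (1:ℝ) * (fun t : ℝ => (1:ℝ) * (fun t => Real.exp (-(2*t))) t
        + (-(2*Real.exp (-ξ))) * (fun t => Real.exp (-t)) t) t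
        + Real.exp (-ξ)^2 * (fun _ : ℝ => (1:ℝ)) t)
        = (fun t => (Real.exp (-t) - Real.exp (-ξ))^2) := by
      funext t
      show (1:ℝ) * ((1:ℝ) * Real.exp (-(2*t)) + (-(2*Real.exp (-ξ))) * Real.exp (-t))
        + Real.exp (-ξ)^2 * 1 = (Real.exp (-t) - Real.exp (-ξ))^2
      rw [hexp2 t]; ring
    rw [hfe] at h2
    rw [h2, h1, hexp2 ξ]; ring
  -- summabilities
  have hsT0 : Summable (fun m => (ℜ m (fun _ => (1:ℝ)) ξ - 1) * p m * y ^ m) := by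
    refine hsummable _ 1 zero_le_one (fun m => ?_)
    exact hdev (fun _ => (1:ℝ)) hone 1 honeb m ξ hξ
  have hsB1 : Summable (fun m => (ℜ m (fun t => Real.exp (-t)) ξ - Real.exp (-ξ)) * p m * y ^ m) := by
    refine hsummable _ 1 zero_le_one (fun m => ?_)
    exact hdev (fun t => Real.exp (-t)) cstar_e1 1 he1b m ξ hξ
  have hsB2 : Summable (fun m => (ℜ m (fun t => Real.exp (-(2*t))) ξ - Real.exp (-(2*ξ))) * p m * y ^ m) := by
    refine hsummable _ 1 zero_le_one (fun m => ?_)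
    exact hdev (fun t => Real.exp (-(2*t))) cstar_e2 1 he2b m ξ hξ
  have hsa : Summable (fun m => (ℜ m φ ξ - φ ξ) * p m * y ^ m) := by
    refine hsummable _ M hM (fun m => ?_)
    exact hdev φ hφ M hMb m ξ hξ
  have hsR1 : Summable (fun m => ℜ m (fun _ => (1:ℝ)) ξ * p m * y ^ m) := by
    refine hsummable _ 1 zero_le_one (fun m => ?_)
    rw [abs_of_nonneg (hR1nn m ξ hξ)]
    have := hR1N m ξ hξ; linarith
  have hsD : Summable (fun m => ℜ m (fun t => (Real.exp (-t) - Real.exp (-ξ))^2) ξ * p m * y ^ m) := by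
    refine hsummable _ 1 zero_le_one (fun m => ?_)
    rw [abs_of_nonneg (hDnn m)]
    have h1 := hDle m; have h2 := hR1N m ξ hξ; linarith
  -- abbreviations for sums
  set T0 := ∑' m, (ℜ m (fun _ => (1:ℝ)) ξ - 1) * p m * y ^ m with hT0def
  set B1 := ∑' m, (ℜ m (fun t => Real.exp (-t)) ξ - Real.exp (-ξ)) * p m * y ^ m with hB1def
  set B2 := ∑' m, (ℜ m (fun t => Real.exp (-(2*t))) ξ - Real.exp (-(2*ξ))) * p m * y ^ m with hB2def
  set TR := ∑' m, ℜ m (fun _ => (1:ℝ)) ξ * p m * y ^ m with hTRdef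
  set TD := ∑' m, ℜ m (fun t => (Real.exp (-t) - Real.exp (-ξ))^2) ξ * p m * y ^ m with hTDdef
  have hT0S : |T0| ≤ S0 := hS0le ξ hξ
  have hB1S : |B1| ≤ S1 := hS1le ξ hξ
  have hB2S : |B2| ≤ S2 := hS2le ξ hξ
  have hTReq : TR = T0 + P := by
    rw [hTRdef, hT0def, hPdef, ← Summable.tsum_add hsT0 hSp]
    exact tsum_congr fun m => by ring
  have hTDeq : TD = B2 - 2*Real.exp (-ξ) * B1 + Real.exp (-ξ)^2 * T0 := by
    rw [hTDdef, hB2def, hB1def, hT0def]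
    have he : (fun m => ℜ m (fun t => (Real.exp (-t) - Real.exp (-ξ))^2) ξ * p m * y ^ m)
        = fun m => (ℜ m (fun t => Real.exp (-(2*t))) ξ - Real.exp (-(2*ξ))) * p m * y ^ m
          + ((-(2*Real.exp (-ξ))) * ((ℜ m (fun t => Real.exp (-t)) ξ - Real.exp (-ξ)) * p m * y ^ m)
          + Real.exp (-ξ)^2 * ((ℜ m (fun _ => (1:ℝ)) ξ - 1) * p m * y ^ m)) :=
      funext fun m => by rw [hDalt m]; ring
    rw [he, Summable.tsum_add hsB2 ((hsB1.mul_left _).add (hsT0.mul_left _)),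
      Summable.tsum_add (hsB1.mul_left _) (hsT0.mul_left _), tsum_mul_left, tsum_mul_left]
    ring
  have hTDnn : 0 ≤ TD := by
    rw [hTDdef]
    exact tsum_nonneg fun m => mul_nonneg (mul_nonneg (hDnn m) (hp m)) (pow_nonneg hy.le m)
  have hTRnn : 0 ≤ TR := by
    rw [hTRdef]
    exact tsum_nonneg fun m => mul_nonneg (mul_nonneg (hR1nn m ξ hξ) (hp m)) (pow_nonneg hy.le m)
  have hexpξ : Real.exp (-ξ) ≤ 1 := hexp_le_one ξ hξ
  have hexpξ0 : 0 < Real.exp (-ξ) := Real.exp_pos _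
  have hTDle : TD ≤ S2 + 2*S1 + S0 := by
    rw [hTDeq]
    have h1 : B2 ≤ S2 := le_trans (le_abs_self _) hB2S
    have h2 : -2*Real.exp (-ξ) * B1 ≤ 2*S1 := by
      nlinarith [mul_nonneg (by linarith : (0:ℝ) ≤ 1 - Real.exp (-ξ)) (abs_nonneg B1),
        mul_nonneg hexpξ0.le (by linarith [neg_abs_le B1] : (0:ℝ) ≤ |B1| + B1), hB1S]
    have h7 : Real.exp (-ξ)^2 * T0 ≤ S0 := by
      nlinarith [mul_nonneg (by nlinarith : (0:ℝ) ≤ 1 - Real.exp (-ξ)^2) (abs_nonneg T0),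
        mul_nonneg (sq_nonneg (Real.exp (-ξ))) (by linarith [le_abs_self T0] : (0:ℝ) ≤ |T0| - T0),
        hT0S]
    linarith
  -- c and d sequences
  have hsdm : Summable (fun m => (φ ξ * (ℜ m (fun _ => (1:ℝ)) ξ - 1)
      + ε₁ * ℜ m (fun _ => (1:ℝ)) ξ
      + K * ℜ m (fun t => (Real.exp (-t) - Real.exp (-ξ))^2) ξ) * p m * y ^ m) := by
    have h := (hsT0.mul_left (φ ξ)).add ((hsR1.mul_left ε₁).add (hsD.mul_left K))
    refine h.congr fun m => ?_
    ring
  have hscm : Summable (fun m => (φ ξ * (ℜ m (fun _ => (1:ℝ)) ξ - 1)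
      - ε₁ * ℜ m (fun _ => (1:ℝ)) ξ
      - K * ℜ m (fun t => (Real.exp (-t) - Real.exp (-ξ))^2) ξ) * p m * y ^ m) := by
    have h := (hsT0.mul_left (φ ξ)).add ((hsR1.mul_left (-ε₁)).add (hsD.mul_left (-K)))
    refine h.congr fun m => ?_
    ring
  have htd : ∑' m, (φ ξ * (ℜ m (fun _ => (1:ℝ)) ξ - 1)
      + ε₁ * ℜ m (fun _ => (1:ℝ)) ξ
      + K * ℜ m (fun t => (Real.exp (-t) - Real.exp (-ξ))^2) ξ) * p m * y ^ m
      = φ ξ * T0 + ε₁ * TR + K * TD := by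
    rw [hT0def, hTRdef, hTDdef]
    have he : (fun m => (φ ξ * (ℜ m (fun _ => (1:ℝ)) ξ - 1)
        + ε₁ * ℜ m (fun _ => (1:ℝ)) ξ
        + K * ℜ m (fun t => (Real.exp (-t) - Real.exp (-ξ))^2) ξ) * p m * y ^ m)
        = fun m => φ ξ * ((ℜ m (fun _ => (1:ℝ)) ξ - 1) * p m * y ^ m)
          + (ε₁ * (ℜ m (fun _ => (1:ℝ)) ξ * p m * y ^ m)
          + K * (ℜ m (fun t => (Real.exp (-t) - Real.exp (-ξ))^2) ξ * p m * y ^ m)) :=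
      funext fun m => by ring
    rw [he, Summable.tsum_add (hsT0.mul_left _) ((hsR1.mul_left _).add (hsD.mul_left _)),
      Summable.tsum_add (hsR1.mul_left _) (hsD.mul_left _), tsum_mul_left, tsum_mul_left, tsum_mul_left]
    ring
  have htc : ∑' m, (φ ξ * (ℜ m (fun _ => (1:ℝ)) ξ - 1)
      - ε₁ * ℜ m (fun _ => (1:ℝ)) ξ
      - K * ℜ m (fun t => (Real.exp (-t) - Real.exp (-ξ))^2) ξ) * p m * y ^ m
      = φ ξ * T0 - ε₁ * TR - K * TD := by
    rw [hT0def, hTRdef, hTDdef]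
    have he : (fun m => (φ ξ * (ℜ m (fun _ => (1:ℝ)) ξ - 1)
        - ε₁ * ℜ m (fun _ => (1:ℝ)) ξ
        - K * ℜ m (fun t => (Real.exp (-t) - Real.exp (-ξ))^2) ξ) * p m * y ^ m)
        = fun m => φ ξ * ((ℜ m (fun _ => (1:ℝ)) ξ - 1) * p m * y ^ m)
          + ((-ε₁) * (ℜ m (fun _ => (1:ℝ)) ξ * p m * y ^ m)
          + (-K) * (ℜ m (fun t => (Real.exp (-t) - Real.exp (-ξ))^2) ξ * p m * y ^ m)) :=
      funext fun m => by ring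
    rw [he, Summable.tsum_add (hsT0.mul_left _) ((hsR1.mul_left _).add (hsD.mul_left _)),
      Summable.tsum_add (hsR1.mul_left _) (hsD.mul_left _), tsum_mul_left, tsum_mul_left, tsum_mul_left]
    ring
  -- comparison of sums
  have hle1 : ∑' m, (ℜ m φ ξ - φ ξ) * p m * y ^ m
      ≤ ∑' m, (φ ξ * (ℜ m (fun _ => (1:ℝ)) ξ - 1)
        + ε₁ * ℜ m (fun _ => (1:ℝ)) ξ
        + K * ℜ m (fun t => (Real.exp (-t) - Real.exp (-ξ))^2) ξ) * p m * y ^ m := by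
    refine Summable.tsum_le_tsum (fun m => ?_) hsa hsdm
    have h1 := hup m
    have h2 := hw m
    calc (ℜ m φ ξ - φ ξ) * p m * y ^ m = (ℜ m φ ξ - φ ξ) * (p m * y ^ m) := by ring
      _ ≤ (φ ξ * (ℜ m (fun _ => (1:ℝ)) ξ - 1)
        + ε₁ * ℜ m (fun _ => (1:ℝ)) ξ
        + K * ℜ m (fun t => (Real.exp (-t) - Real.exp (-ξ))^2) ξ) * (p m * y ^ m) :=
        mul_le_mul_of_nonneg_right h1 h2
      _ = _ := by ring
  have hle2 : ∑' m, (φ ξ * (ℜ m (fun _ => (1:ℝ)) ξ - 1)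
        - ε₁ * ℜ m (fun _ => (1:ℝ)) ξ
        - K * ℜ m (fun t => (Real.exp (-t) - Real.exp (-ξ))^2) ξ) * p m * y ^ m
      ≤ ∑' m, (ℜ m φ ξ - φ ξ) * p m * y ^ m := by
    refine Summable.tsum_le_tsum (fun m => ?_) hscm hsa
    have h1 := hlo m
    have h2 := hw m
    calc (φ ξ * (ℜ m (fun _ => (1:ℝ)) ξ - 1)
        - ε₁ * ℜ m (fun _ => (1:ℝ)) ξ
        - K * ℜ m (fun t => (Real.exp (-t) - Real.exp (-ξ))^2) ξ) * p m * y ^ m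
        = (φ ξ * (ℜ m (fun _ => (1:ℝ)) ξ - 1)
        - ε₁ * ℜ m (fun _ => (1:ℝ)) ξ
        - K * ℜ m (fun t => (Real.exp (-t) - Real.exp (-ξ))^2) ξ) * (p m * y ^ m) := by ring
      _ ≤ (ℜ m φ ξ - φ ξ) * (p m * y ^ m) := mul_le_mul_of_nonneg_right h1 h2
      _ = _ := by ring
  rw [htd] at hle1
  rw [htc] at hle2
  -- final numeric bounds
  have hphiT0 : |φ ξ * T0| ≤ M * S0 := by
    rw [abs_mul]
    exact mul_le_mul (hMb ξ hξ) hT0S (abs_nonneg _) hM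
  have hup2 : φ ξ * T0 ≤ M * S0 := le_trans (le_abs_self _) hphiT0
  have hlo2 : -(M * S0) ≤ φ ξ * T0 := neg_le_of_neg_le (by
    have := neg_abs_le (φ ξ * T0); linarith)
  have hT0le : T0 ≤ S0 := le_trans (le_abs_self _) hT0S
  have hTRle : TR ≤ S0 + P := by rw [hTReq]; linarith
  have hmul1 : ε₁ * TR ≤ ε₁ * (S0 + P) := mul_le_mul_of_nonneg_left hTRle hε₁
  have hmul2 : K * TD ≤ K * (S2 + 2*S1 + S0) := mul_le_mul_of_nonneg_left hTDle hK
  have hmul1' : 0 ≤ ε₁ * TR := mul_nonneg hε₁ hTRnn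
  have hmul2' : 0 ≤ K * TD := mul_nonneg hK hTDnn
  rw [abs_le]
  constructor
  · linarith
  · linarith

/-- Korovkin theorem via a regular power series method. -/
theorem stmt_14 (p : ℕ → ℝ) (hp0 : 0 < p 0) (hp : ∀ m, 0 ≤ p m)
    (R : ENNReal) (hR : 0 < R)
    (hpsum : ∀ y : ℝ, 0 < y → ENNReal.ofReal y < R → Summable (fun m => p m * y ^ m))
    (hreg : ∀ m : ℕ, Tendsto (fun y : ℝ => p m * y ^ m / ∑' k : ℕ, p k * y ^ k)
        (psFilter R) (nhds 0))
    (ℜ : ℕ → (ℝ → ℝ) → ℝ → ℝ)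
    (hmap : ∀ m f, CStar f → BStar (ℜ m f))
    (hlin : ∀ (m : ℕ) (f g : ℝ → ℝ) (a b : ℝ), CStar f → CStar g →
      ∀ ξ : ℝ, 0 ≤ ξ → ℜ m (fun t => a * f t + b * g t) ξ = a * ℜ m f ξ + b * ℜ m g ξ)
    (hpos : ∀ (m : ℕ) (f g : ℝ → ℝ), CStar f → CStar g →
      (∀ t : ℝ, 0 ≤ t → f t ≤ g t) → ∀ ξ : ℝ, 0 ≤ ξ → ℜ m f ξ ≤ ℜ m g ξ)
    (hbound : ∀ y : ℝ, 0 < y → ENNReal.ofReal y < R →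
      Summable (fun m => supNorm (ℜ m (fun _ => 1)) * p m * y ^ m))
    (htest : ∀ ν : ℕ, ν ≤ 2 →
      Tendsto (fun y : ℝ =>
          supNorm (fun ξ => ∑' m : ℕ,
            (ℜ m (fun t => Real.exp (-(ν : ℝ) * t)) ξ - Real.exp (-(ν : ℝ) * ξ)) *
              p m * y ^ m) / ∑' m : ℕ, p m * y ^ m)
        (psFilter R) (nhds 0)) :
    ∀ φ : ℝ → ℝ, CStar φ →
      Tendsto (fun y : ℝ =>
          supNorm (fun ξ => ∑' m : ℕ, (ℜ m φ ξ - φ ξ) * p m * y ^ m) /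
            ∑' m : ℕ, p m * y ^ m)
        (psFilter R) (nhds 0) := by
  intro φ hφ
  -- rewrite the test hypotheses
  have h0 : Tendsto (fun y : ℝ =>
      supNorm (fun ξ => ∑' m : ℕ, (ℜ m (fun _ => (1:ℝ)) ξ - 1) * p m * y ^ m) /
        ∑' m : ℕ, p m * y ^ m) (psFilter R) (nhds 0) := by
    have h := htest 0 (by norm_num)
    simpa only [Nat.cast_zero, neg_zero, zero_mul, Real.exp_zero] using h
  have h1 : Tendsto (fun y : ℝ =>
      supNorm (fun ξ => ∑' m : ℕ,
        (ℜ m (fun t => Real.exp (-t)) ξ - Real.exp (-ξ)) * p m * y ^ m) /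
        ∑' m : ℕ, p m * y ^ m) (psFilter R) (nhds 0) := by
    have h := htest 1 (by norm_num)
    simpa only [Nat.cast_one, neg_mul, one_mul] using h
  have h2 : Tendsto (fun y : ℝ =>
      supNorm (fun ξ => ∑' m : ℕ,
        (ℜ m (fun t => Real.exp (-(2*t))) ξ - Real.exp (-(2*ξ))) * p m * y ^ m) /
        ∑' m : ℕ, p m * y ^ m) (psFilter R) (nhds 0) := by
    have h := htest 2 (by norm_num)
    simpa only [Nat.cast_ofNat, neg_mul] using h
  obtain ⟨M, hM0, hMb⟩ := cstar_bounded hφ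
  rw [Metric.tendsto_nhds]
  intro ε hε
  have hε3 : 0 < ε / 3 := by linarith
  obtain ⟨δ, hδ, hδε⟩ := cstar_unif hφ hε3
  set K := 2 * M / δ ^ 2 with hKdef
  have hK : 0 ≤ K := by positivity
  have huc : ∀ t ξ : ℝ, 0 ≤ t → 0 ≤ ξ →
      |φ t - φ ξ| ≤ ε / 3 + K * (Real.exp (-t) - Real.exp (-ξ))^2 := by
    intro t ξ ht hξ
    rcases lt_or_ge |Real.exp (-t) - Real.exp (-ξ)| δ with h | h
    · have h3 := hδε t ξ ht hξ h
      nlinarith [sq_nonneg (Real.exp (-t) - Real.exp (-ξ))]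
    · have h4 : δ ^ 2 ≤ (Real.exp (-t) - Real.exp (-ξ)) ^ 2 := by
        have := sq_abs (Real.exp (-t) - Real.exp (-ξ))
        nlinarith [abs_nonneg (Real.exp (-t) - Real.exp (-ξ))]
      have h5 : |φ t - φ ξ| ≤ 2 * M := by
        have h6 := hMb t ht
        have h7 := hMb ξ hξ
        have h8 := abs_sub (φ t) (φ ξ)
        linarith
      have h9 : K * δ ^ 2 = 2 * M := by
        rw [hKdef]; field_simp
      have h10 : K * δ ^ 2 ≤ K * (Real.exp (-t) - Real.exp (-ξ)) ^ 2 :=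
        mul_le_mul_of_nonneg_left h4 hK
      linarith
  set η := (ε/3) / (ε/3 + 4*K + M + 1) with hηdef
  have hq : 0 < ε/3 + 4*K + M + 1 := by linarith
  have hη : 0 < η := by positivity
  have hηb : (ε/3 + 4*K + M) * η < ε/3 := by
    rw [hηdef, ← mul_div_assoc, div_lt_iff₀ hq]
    nlinarith
  have hevs : ∀ᶠ y in psFilter R, 0 < y ∧ ENNReal.ofReal y < R := by
    have hm : {y : ℝ | 0 < y ∧ ENNReal.ofReal y < R} ∈ psFilter R :=
      mem_inf_of_right (mem_principal_self _)
    exact hm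
  have he0 := Metric.tendsto_nhds.1 h0 η hη
  have he1 := Metric.tendsto_nhds.1 h1 η hη
  have he2 := Metric.tendsto_nhds.1 h2 η hη
  filter_upwards [hevs, he0, he1, he2] with y hy hd0 hd1 hd2
  obtain ⟨hy1, hy2⟩ := hy
  have hSp := hpsum y hy1 hy2
  have hSB := hbound y hy1 hy2
  have hP : 0 < ∑' m : ℕ, p m * y ^ m := by
    have hfirst : p 0 * y ^ 0 ≤ ∑' m : ℕ, p m * y ^ m :=
      Summable.le_tsum hSp 0 (fun j _ => mul_nonneg (hp j) (pow_nonneg hy1.le j))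
    have : (0:ℝ) < p 0 * y ^ 0 := by simpa using hp0
    linarith
  -- the three smallness facts
  have hS0 : supNorm (fun ξ => ∑' m : ℕ, (ℜ m (fun _ => (1:ℝ)) ξ - 1) * p m * y ^ m)
      < η * ∑' m : ℕ, p m * y ^ m := by
    rw [Real.dist_eq, sub_zero] at hd0
    have := lt_of_le_of_lt (le_abs_self _) hd0
    rwa [div_lt_iff₀ hP] at this
  have hS1 : supNorm (fun ξ => ∑' m : ℕ,
      (ℜ m (fun t => Real.exp (-t)) ξ - Real.exp (-ξ)) * p m * y ^ m)
      < η * ∑' m : ℕ, p m * y ^ m := by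
    rw [Real.dist_eq, sub_zero] at hd1
    have := lt_of_le_of_lt (le_abs_self _) hd1
    rwa [div_lt_iff₀ hP] at this
  have hS2 : supNorm (fun ξ => ∑' m : ℕ,
      (ℜ m (fun t => Real.exp (-(2*t))) ξ - Real.exp (-(2*ξ))) * p m * y ^ m)
      < η * ∑' m : ℕ, p m * y ^ m := by
    rw [Real.dist_eq, sub_zero] at hd2
    have := lt_of_le_of_lt (le_abs_self _) hd2
    rwa [div_lt_iff₀ hP] at this
  have hkey := key_estimate p hp ℜ hmap hlin hpos hy1 hSp hSB φ hφ M (ε/3) K hM0 hMb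
    hε3.le hK huc
  have hnum_nn : 0 ≤ supNorm (fun ξ => ∑' m : ℕ, (ℜ m φ ξ - φ ξ) * p m * y ^ m) :=
    supNorm_nonneg _
  rw [Real.dist_eq, sub_zero, abs_of_nonneg (div_nonneg hnum_nn hP.le), div_lt_iff₀ hP]
  set S0 := supNorm (fun ξ => ∑' m : ℕ, (ℜ m (fun _ => (1:ℝ)) ξ - 1) * p m * y ^ m)
  set S1 := supNorm (fun ξ => ∑' m : ℕ,
      (ℜ m (fun t => Real.exp (-t)) ξ - Real.exp (-ξ)) * p m * y ^ m)
  set S2 := supNorm (fun ξ => ∑' m : ℕ,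
      (ℜ m (fun t => Real.exp (-(2*t))) ξ - Real.exp (-(2*ξ))) * p m * y ^ m)
  set P := ∑' m : ℕ, p m * y ^ m
  have hS0nn : 0 ≤ S0 := supNorm_nonneg _
  have hS1nn : 0 ≤ S1 := supNorm_nonneg _
  have hS2nn : 0 ≤ S2 := supNorm_nonneg _
  have e1 : ε/3 * (S0 + P) ≤ ε/3 * (η*P + P) :=
    mul_le_mul_of_nonneg_left (by linarith) hε3.le
  have e2 : K * (S2 + 2*S1 + S0) ≤ K * (4*(η*P)) :=
    mul_le_mul_of_nonneg_left (by linarith) hK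
  have e3 : M * S0 ≤ M * (η*P) := mul_le_mul_of_nonneg_left hS0.le hM0
  have e4 : ((ε/3 + 4*K + M) * η) * P < (ε/3) * P := mul_lt_mul_of_pos_right hηb hP
  nlinarith [hkey]
end
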